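/- A hypercomplex structure on a real Lie algebra g is equivalent to the data of a pair (m, J) where m is a complex Lie subalgebra of g^ℂ with g^ℂ = m ⊕ σ(m), and J is a ℂ-linear endomorphism of g^ℂ satisfying J² = -Id, N_J = 0, σJ = Jσ, and J(m) = σ(m). -/

import Mathlib

open TensorProduct

/-- The Nijenhuis tensor of an endomorphism `J` of a Lie algebra:
`N_J(x,y) = [x,y] + J[Jx,y] + J[x,Jy] - [Jx,Jy]`. -/
def nijenhuis {R L : Type*} [CommRing R] [LieRing L] [Module R L]
    (J : L →ₗ[R] L) (x y : L) : L :=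
  ⁅x, y⁆ + J ⁅J x, y⁆ + J ⁅x, J y⁆ - ⁅J x, J y⁆

/-- The conjugation `σ` of the complexification `ℂ ⊗[ℝ] g` with respect to the
real form `g`. -/
noncomputable def conjugation (L : Type*) [AddCommGroup L] [Module ℝ L] :
    (ℂ ⊗[ℝ] L) →ₗ[ℝ] (ℂ ⊗[ℝ] L) :=
  TensorProduct.map Complex.conjAe.toLinearMap LinearMap.id


section BracketHelpers

variable {M : Type*} [LieRing M]

@[simp] lemma lie_zero' (u : M) : ⁅u, (0 : M)⁆ = 0 := lie_zero u
@[simp] lemma zero_lie' (u : M) : ⁅(0 : M), u⁆ = 0 := zero_lie u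
@[simp] lemma add_lie' (a b c : M) : ⁅a + b, c⁆ = ⁅a, c⁆ + ⁅b, c⁆ := add_lie a b c
@[simp] lemma lie_add' (a b c : M) : ⁅a, b + c⁆ = ⁅a, b⁆ + ⁅a, c⁆ := lie_add a b c
@[simp] lemma neg_lie' (a b : M) : ⁅-a, b⁆ = -⁅a, b⁆ := neg_lie a b
@[simp] lemma lie_neg' (a b : M) : ⁅a, -b⁆ = -⁅a, b⁆ := lie_neg a b

@[simp] lemma smul_lie' {R : Type*} [CommRing R] [LieAlgebra R M]
    (t : R) (a b : M) : ⁅t • a, b⁆ = t • ⁅a, b⁆ := smul_lie t a b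

@[simp] lemma lie_smul' {R : Type*} [CommRing R] [LieAlgebra R M]
    (t : R) (a b : M) : ⁅a, t • b⁆ = t • ⁅a, b⁆ := lie_smul t a b

end BracketHelpers

section NijHelpers

variable {R M : Type*} [CommRing R] [LieRing M] [Module R M] (J : M →ₗ[R] M)

lemma nij_zero_left (y : M) : nijenhuis J 0 y = 0 := by
  simp [nijenhuis]

lemma nij_zero_right (x : M) : nijenhuis J x 0 = 0 := by
  simp [nijenhuis]

lemma nij_add_left (x x' y : M) :
    nijenhuis J (x + x') y = nijenhuis J x y + nijenhuis J x' y := by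
  simp only [nijenhuis, map_add, add_lie', lie_add']
  abel

lemma nij_add_right (x y y' : M) :
    nijenhuis J x (y + y') = nijenhuis J x y + nijenhuis J x y' := by
  simp only [nijenhuis, map_add, add_lie', lie_add']
  abel

end NijHelpers

namespace Stmt3Aux


variable {L : Type*} [LieRing L] [LieAlgebra ℝ L]

noncomputable def ι : L →ₗ[ℝ] ℂ ⊗[ℝ] L := TensorProduct.mk ℝ ℂ L 1

noncomputable def rePart : (ℂ ⊗[ℝ] L) →ₗ[ℝ] L :=
  (TensorProduct.lid ℝ L).toLinearMap ∘ₗ TensorProduct.map Complex.reLm LinearMap.id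

noncomputable def imPart : (ℂ ⊗[ℝ] L) →ₗ[ℝ] L :=
  (TensorProduct.lid ℝ L).toLinearMap ∘ₗ TensorProduct.map Complex.imLm LinearMap.id

@[simp] lemma ι_apply (x : L) : (ι x : ℂ ⊗[ℝ] L) = (1 : ℂ) ⊗ₜ x := rfl

@[simp] lemma rePart_tmul (a : ℂ) (x : L) : rePart (a ⊗ₜ x) = a.re • x := by
  simp [rePart]

@[simp] lemma imPart_tmul (a : ℂ) (x : L) : imPart (a ⊗ₜ x) = a.im • x := by
  simp [imPart]

@[simp] lemma conj_tmul (a : ℂ) (x : L) :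
    conjugation L (a ⊗ₜ x) = (starRingEnd ℂ a) ⊗ₜ x := rfl

lemma conj_conj (v : ℂ ⊗[ℝ] L) : conjugation L (conjugation L v) = v := by
  induction v using TensorProduct.induction_on with
  | zero => simp
  | tmul a x => simp
  | add u w hu hw => simp [map_add, hu, hw]

lemma conj_smul (c : ℂ) (v : ℂ ⊗[ℝ] L) :
    conjugation L (c • v) = (starRingEnd ℂ c) • conjugation L v := by
  induction v using TensorProduct.induction_on with
  | zero => simp
  | tmul a x => simp [TensorProduct.smul_tmul', map_mul]
  | add u w hu hw => simp [smul_add, map_add, hu, hw]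

lemma conj_lie (u v : ℂ ⊗[ℝ] L) :
    conjugation L ⁅u, v⁆ = ⁅conjugation L u, conjugation L v⁆ := by
  induction u using TensorProduct.induction_on with
  | zero => simp only [zero_lie', map_zero]
  | tmul a x =>
    induction v using TensorProduct.induction_on with
    | zero => simp only [lie_zero', map_zero]
    | tmul b y =>
      simp [LieAlgebra.ExtendScalars.bracket_tmul, map_mul]
    | add p q hp hq => simp only [lie_add', map_add, hp, hq]
  | add p q hp hq => simp only [add_lie', map_add, hp, hq]

@[simp] lemma conj_ι (x : L) : conjugation L (ι x) = ι x := by simp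

lemma ι_lie (x y : L) : (ι ⁅x, y⁆ : ℂ ⊗[ℝ] L) = ⁅ι x, ι y⁆ := by
  simp [LieAlgebra.ExtendScalars.bracket_tmul]

@[simp] lemma rePart_ι (x : L) : rePart (ι x : ℂ ⊗[ℝ] L) = x := by simp

lemma ι_injective : Function.Injective (ι (L := L)) := by
  intro x y h
  have := congrArg rePart h
  simpa using this

lemma decomp (v : ℂ ⊗[ℝ] L) :
    v = ι (rePart v) + Complex.I • (ι (imPart v) : ℂ ⊗[ℝ] L) := by
  induction v using TensorProduct.induction_on with
  | zero => simp
  | tmul a x =>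
    simp only [rePart_tmul, imPart_tmul, ι_apply, TensorProduct.smul_tmul',
      TensorProduct.tmul_smul]
    rw [← TensorProduct.add_tmul]
    congr 1
    simp [Complex.ext_iff]
  | add u w hu hw =>
    calc u + w = (ι (rePart u) + Complex.I • ι (imPart u))
        + (ι (rePart w) + Complex.I • (ι (imPart w) : ℂ ⊗[ℝ] L)) := by rw [← hu, ← hw]
      _ = _ := by rw [map_add rePart, map_add imPart, map_add ι, map_add ι, smul_add]; abel

@[simp] lemma imPart_I_smul_ι (b : L) :
    imPart (Complex.I • (ι b : ℂ ⊗[ℝ] L)) = b := by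
  simp [TensorProduct.smul_tmul']

@[simp] lemma rePart_I_smul_ι (b : L) :
    rePart (Complex.I • (ι b : ℂ ⊗[ℝ] L)) = 0 := by
  simp [TensorProduct.smul_tmul']

lemma fixed_eq {v : ℂ ⊗[ℝ] L} (h : conjugation L v = v) : v = ι (rePart v) := by
  obtain ⟨a, b, hd⟩ : ∃ a b, v = ι a + Complex.I • (ι b : ℂ ⊗[ℝ] L) :=
    ⟨_, _, decomp v⟩
  have hc : conjugation L v = ι a - Complex.I • (ι b : ℂ ⊗[ℝ] L) := by
    rw [hd, map_add, conj_ι, conj_smul, conj_ι]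
    simp [Complex.conj_I, sub_eq_add_neg, neg_smul]
  have hb : Complex.I • (ι b : ℂ ⊗[ℝ] L) = 0 := by
    have h4 : ι a + Complex.I • (ι b : ℂ ⊗[ℝ] L)
        = ι a - Complex.I • (ι b : ℂ ⊗[ℝ] L) := by rw [← hd, ← hc, h]
    have hww : Complex.I • (ι b : ℂ ⊗[ℝ] L) = -(Complex.I • (ι b : ℂ ⊗[ℝ] L)) := by
      have h4' := h4
      rw [sub_eq_add_neg] at h4'
      exact add_left_cancel h4'
    have h5 : (2:ℝ) • (Complex.I • (ι b : ℂ ⊗[ℝ] L)) = 0 := by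
      rw [two_smul]
      nth_rewrite 1 [hww]
      exact neg_add_cancel _
    have := congrArg (fun z => (2:ℝ)⁻¹ • z) h5
    simpa [smul_smul] using this
  have hb0 : b = 0 := by
    have := congrArg imPart hb
    simpa [TensorProduct.smul_tmul'] using this
  have hv : v = ι a := by rw [hd, hb0]; simp
  rw [hv, rePart_ι]


section Forward

variable (J1 : L →ₗ[ℝ] L)

lemma conj_baseChange (f : L →ₗ[ℝ] L) (v : ℂ ⊗[ℝ] L) :
    conjugation L (f.baseChange ℂ v) = f.baseChange ℂ (conjugation L v) := by
  induction v using TensorProduct.induction_on with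
  | zero => simp
  | tmul a x => simp [LinearMap.baseChange_tmul]
  | add u w hu hw => simp [map_add, hu, hw]

lemma baseChange_ι (f : L →ₗ[ℝ] L) (x : L) :
    f.baseChange ℂ (ι x) = ι (f x) := by
  simp [LinearMap.baseChange_tmul]

lemma mem_map_conj_iff (N : Submodule ℝ (ℂ ⊗[ℝ] L)) {v : ℂ ⊗[ℝ] L} :
    v ∈ N.map (conjugation L) ↔ conjugation L v ∈ N := by
  constructor
  · rintro ⟨w, hw, rfl⟩; rwa [conj_conj]
  · intro h; exact ⟨conjugation L v, h, conj_conj v⟩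

noncomputable def eigI : Submodule ℂ (ℂ ⊗[ℝ] L) :=
  LinearMap.ker (J1.baseChange ℂ - Complex.I • LinearMap.id)

lemma mem_eigI {v : ℂ ⊗[ℝ] L} :
    v ∈ eigI J1 ↔ J1.baseChange ℂ v = Complex.I • v := by
  rw [eigI, LinearMap.mem_ker, LinearMap.sub_apply, LinearMap.smul_apply,
    LinearMap.id_apply, sub_eq_zero]

lemma mem_conj_eigI {v : ℂ ⊗[ℝ] L} :
    v ∈ ((eigI J1).restrictScalars ℝ).map (conjugation L) ↔
      J1.baseChange ℂ v = -(Complex.I • v) := by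
  rw [mem_map_conj_iff, Submodule.restrictScalars_mem, mem_eigI]
  constructor
  · intro h
    have h2 := congrArg (conjugation L) h
    rw [conj_baseChange, conj_conj, conj_smul, conj_conj, Complex.conj_I, neg_smul] at h2
    exact h2
  · intro h
    have h2 := congrArg (conjugation L) h
    rw [conj_baseChange] at h2
    rw [h2, map_neg, conj_smul, Complex.conj_I, neg_smul, neg_neg]

lemma half_cancel (w : ℂ ⊗[ℝ] L) (h : (2:ℂ) • w = 0) : w = 0 := by
  have := congrArg (fun z => (2:ℂ)⁻¹ • z) h
  simpa [smul_smul] using this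

lemma I_smul_cancel {v w : ℂ ⊗[ℝ] L} (h : Complex.I • v = Complex.I • w) : v = w := by
  have := congrArg (fun z => (-Complex.I) • z) h
  simpa [smul_smul, neg_mul, Complex.I_mul_I] using this

lemma eigI_inf (hJ : J1 ∘ₗ J1 = -LinearMap.id) :
    ((eigI J1).restrictScalars ℝ) ⊓ ((eigI J1).restrictScalars ℝ).map (conjugation L) = ⊥ := by
  rw [eq_bot_iff]
  intro v hv
  rw [Submodule.mem_inf] at hv
  obtain ⟨hv1, hv2⟩ := hv
  rw [Submodule.restrictScalars_mem, mem_eigI] at hv1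
  rw [mem_conj_eigI] at hv2
  have h3 : Complex.I • v = -(Complex.I • v) := hv1.symm.trans hv2
  have h4 : (2:ℂ) • (Complex.I • v) = 0 := by
    rw [two_smul]
    nth_rewrite 1 [h3]
    exact neg_add_cancel _
  have h5 := half_cancel _ h4
  have h6 : v = 0 := I_smul_cancel (v := v) (w := 0) (by rw [h5, smul_zero])
  rw [Submodule.mem_bot]
  exact h6

lemma baseChange_sq (hJ : J1 ∘ₗ J1 = -LinearMap.id) (v : ℂ ⊗[ℝ] L) :
    J1.baseChange ℂ (J1.baseChange ℂ v) = -v := by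
  have : J1.baseChange ℂ ∘ₗ J1.baseChange ℂ = -LinearMap.id := by
    rw [← LinearMap.baseChange_comp, hJ, LinearMap.baseChange_neg, LinearMap.baseChange_id]
  have h2 := congrArg (fun F => F v) this
  simpa using h2

lemma eigI_sup (hJ : J1 ∘ₗ J1 = -LinearMap.id) :
    ((eigI J1).restrictScalars ℝ) ⊔ ((eigI J1).restrictScalars ℝ).map (conjugation L) = ⊤ := by
  rw [eq_top_iff]
  intro v _
  set Jc := J1.baseChange ℂ with hJc
  have ha : (2:ℂ)⁻¹ • (v - Complex.I • Jc v) ∈ (eigI J1).restrictScalars ℝ := by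
    rw [Submodule.restrictScalars_mem, mem_eigI]
    rw [map_smul, map_sub, map_smul, baseChange_sq J1 hJ]
    match_scalars <;> norm_num [Complex.ext_iff]
  have hb : (2:ℂ)⁻¹ • (v + Complex.I • Jc v) ∈
      ((eigI J1).restrictScalars ℝ).map (conjugation L) := by
    rw [mem_conj_eigI]
    rw [map_smul, map_add, map_smul, baseChange_sq J1 hJ]
    match_scalars <;> norm_num [Complex.ext_iff]
  have hv : v = (2:ℂ)⁻¹ • (v - Complex.I • Jc v) + (2:ℂ)⁻¹ • (v + Complex.I • Jc v) := by
    match_scalars <;> norm_num [Complex.ext_iff]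
  rw [hv]
  exact Submodule.add_mem _ (Submodule.mem_sup_left ha) (Submodule.mem_sup_right hb)

lemma nij_baseChange (f : L →ₗ[ℝ] L) (h : ∀ x y, nijenhuis f x y = 0)
    (v w : ℂ ⊗[ℝ] L) : nijenhuis (f.baseChange ℂ) v w = 0 := by
  induction v using TensorProduct.induction_on with
  | zero => exact nij_zero_left _ _
  | tmul a x =>
    induction w using TensorProduct.induction_on with
    | zero => exact nij_zero_right _ _
    | tmul b y =>
      have e : nijenhuis (f.baseChange ℂ) (a ⊗ₜ[ℝ] x) (b ⊗ₜ[ℝ] y)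
          = (a * b) ⊗ₜ[ℝ] nijenhuis f x y := by
        simp only [nijenhuis, LinearMap.baseChange_tmul,
          LieAlgebra.ExtendScalars.bracket_tmul, TensorProduct.tmul_add,
          TensorProduct.tmul_sub]
      rw [e, h, TensorProduct.tmul_zero]
    | add p q hp hq => rw [nij_add_right, hp, hq, add_zero]
  | add p q hp hq => rw [nij_add_left, hp, hq, add_zero]

lemma eigI_lie_mem (hN : ∀ x y, nijenhuis J1 x y = 0) {x y : ℂ ⊗[ℝ] L}
    (hx : x ∈ eigI J1) (hy : y ∈ eigI J1) : ⁅x, y⁆ ∈ eigI J1 := by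
  rw [mem_eigI] at hx hy ⊢
  have h0 := nij_baseChange J1 hN x y
  have e1 : ⁅Complex.I • x, y⁆ = Complex.I • ⁅x, y⁆ := by
    have h := smul_lie (R := ℂ) (L := ℂ ⊗[ℝ] L) (M := ℂ ⊗[ℝ] L) Complex.I x y; exact h
  have e2 : ⁅x, Complex.I • y⁆ = Complex.I • ⁅x, y⁆ := by
    have h := lie_smul (R := ℂ) (L := ℂ ⊗[ℝ] L) (M := ℂ ⊗[ℝ] L) Complex.I x y; exact h
  have e3 : ⁅Complex.I • x, Complex.I • y⁆ = Complex.I • Complex.I • ⁅x, y⁆ := by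
    have h := smul_lie (R := ℂ) (L := ℂ ⊗[ℝ] L) (M := ℂ ⊗[ℝ] L) Complex.I x (Complex.I • y)
    rw [h, e2]
  rw [nijenhuis, hx, hy, e1, e2, e3, map_smul, smul_smul,
    Complex.I_mul_I, neg_one_smul, sub_neg_eq_add] at h0
  set B := ⁅x, y⁆
  set w := Complex.I • (J1.baseChange ℂ) B with hw
  have h2 : (2:ℂ) • (B + w) = 0 := by
    calc (2:ℂ) • (B + w)
        = B + w + w + B := by module
      _ = 0 := h0
  have h3 := half_cancel _ h2
  have h4 : w = -B := eq_neg_of_add_eq_zero_right h3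
  apply I_smul_cancel
  rw [smul_smul, Complex.I_mul_I, neg_one_smul, ← hw, h4]

noncomputable def mFwd (hN : ∀ x y, nijenhuis J1 x y = 0) : LieSubalgebra ℂ (ℂ ⊗[ℝ] L) :=
  { eigI J1 with lie_mem' := fun hx hy => eigI_lie_mem J1 hN hx hy }

lemma mFwd_toSubmodule (hN : ∀ x y, nijenhuis J1 x y = 0) :
    (mFwd J1 hN).toSubmodule = eigI J1 := rfl

lemma baseChange_anti (J2 : L →ₗ[ℝ] L) (hanti : J1 ∘ₗ J2 = -(J2 ∘ₗ J1)) (u : ℂ ⊗[ℝ] L) :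
    J1.baseChange ℂ (J2.baseChange ℂ u) = -(J2.baseChange ℂ (J1.baseChange ℂ u)) := by
  have e : (J1.baseChange ℂ) ∘ₗ (J2.baseChange ℂ)
      = -((J2.baseChange ℂ) ∘ₗ (J1.baseChange ℂ)) := by
    rw [← LinearMap.baseChange_comp, ← LinearMap.baseChange_comp, hanti,
      LinearMap.baseChange_neg]
  have h2 := congrArg (fun F => F u) e
  simpa using h2

lemma map_eigI (J2 : L →ₗ[ℝ] L) (hanti : J1 ∘ₗ J2 = -(J2 ∘ₗ J1))
    (hJ2 : J2 ∘ₗ J2 = -LinearMap.id) :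
    ((eigI J1).restrictScalars ℝ).map ((J2.baseChange ℂ).restrictScalars ℝ) =
      ((eigI J1).restrictScalars ℝ).map (conjugation L) := by
  apply le_antisymm
  · rintro v ⟨w, hw, rfl⟩
    have hw' := (mem_eigI _).mp hw
    rw [mem_conj_eigI]
    show J1.baseChange ℂ (J2.baseChange ℂ w) = -(Complex.I • J2.baseChange ℂ w)
    rw [baseChange_anti J1 J2 hanti, hw', map_smul]
  · intro v hv
    rw [mem_conj_eigI] at hv
    refine ⟨-(J2.baseChange ℂ v), ?_, ?_⟩
    · refine (mem_eigI _).mpr ?_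
      rw [map_neg, baseChange_anti J1 J2 hanti, hv]
      rw [map_neg, map_smul, smul_neg, neg_neg]
    · show (J2.baseChange ℂ) (-(J2.baseChange ℂ v)) = v
      rw [map_neg, baseChange_sq J2 hJ2, neg_neg]

lemma forward (J1 J2 J3 : L →ₗ[ℝ] L)
    (h1 : J1 ∘ₗ J1 = -LinearMap.id) (h2 : J2 ∘ₗ J2 = -LinearMap.id)
    (h12 : J1 ∘ₗ J2 = J3) (h21 : J2 ∘ₗ J1 = -J3)
    (hN1 : ∀ x y : L, nijenhuis J1 x y = 0)
    (hN2 : ∀ x y : L, nijenhuis J2 x y = 0) :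
    ∃ (m : LieSubalgebra ℂ (ℂ ⊗[ℝ] L)) (J : (ℂ ⊗[ℝ] L) →ₗ[ℂ] (ℂ ⊗[ℝ] L)),
        (m.toSubmodule.restrictScalars ℝ) ⊓
          (m.toSubmodule.restrictScalars ℝ).map (conjugation L) = ⊥ ∧
        (m.toSubmodule.restrictScalars ℝ) ⊔
          (m.toSubmodule.restrictScalars ℝ).map (conjugation L) = ⊤ ∧
        J ∘ₗ J = -LinearMap.id ∧
        (∀ x y : ℂ ⊗[ℝ] L, nijenhuis J x y = 0) ∧
        conjugation L ∘ₗ (J.restrictScalars ℝ) = (J.restrictScalars ℝ) ∘ₗ conjugation L ∧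
        (m.toSubmodule.restrictScalars ℝ).map (J.restrictScalars ℝ) =
          (m.toSubmodule.restrictScalars ℝ).map (conjugation L) := by
  have hanti : J1 ∘ₗ J2 = -(J2 ∘ₗ J1) := by rw [h12, h21, neg_neg]
  refine ⟨mFwd J1 hN1, J2.baseChange ℂ, ?_, ?_, ?_, ?_, ?_, ?_⟩
  · exact eigI_inf J1 h1
  · exact eigI_sup J1 h1
  · rw [← LinearMap.baseChange_comp, h2, LinearMap.baseChange_neg, LinearMap.baseChange_id]
  · exact nij_baseChange J2 hN2
  · exact LinearMap.ext fun v => conj_baseChange J2 v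
  · exact map_eigI J1 J2 hanti h2

end Forward


section Backward

lemma nij_transfer (f : L →ₗ[ℝ] L) (F : (ℂ ⊗[ℝ] L) →ₗ[ℝ] (ℂ ⊗[ℝ] L))
    (h : ∀ x, (ι (f x) : ℂ ⊗[ℝ] L) = F (ι x)) (x y : L) :
    (ι (nijenhuis f x y) : ℂ ⊗[ℝ] L) = nijenhuis F (ι x) (ι y) := by
  simp only [nijenhuis, map_add, map_sub, ι_lie, h]

set_option maxHeartbeats 2000000 in
lemma backward (m : LieSubalgebra ℂ (ℂ ⊗[ℝ] L)) (J : (ℂ ⊗[ℝ] L) →ₗ[ℂ] (ℂ ⊗[ℝ] L))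
    (hinf : (m.toSubmodule.restrictScalars ℝ) ⊓
      (m.toSubmodule.restrictScalars ℝ).map (conjugation L) = ⊥)
    (hsup : (m.toSubmodule.restrictScalars ℝ) ⊔
      (m.toSubmodule.restrictScalars ℝ).map (conjugation L) = ⊤)
    (hJJ : J ∘ₗ J = -LinearMap.id)
    (hNJ : ∀ x y : ℂ ⊗[ℝ] L, nijenhuis J x y = 0)
    (hσJ : conjugation L ∘ₗ (J.restrictScalars ℝ) = (J.restrictScalars ℝ) ∘ₗ conjugation L)
    (hJm : (m.toSubmodule.restrictScalars ℝ).map (J.restrictScalars ℝ) =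
      (m.toSubmodule.restrictScalars ℝ).map (conjugation L)) :
    ∃ J1 J2 J3 : L →ₗ[ℝ] L,
        J1 ∘ₗ J1 = -LinearMap.id ∧ J2 ∘ₗ J2 = -LinearMap.id ∧
        J3 ∘ₗ J3 = -LinearMap.id ∧
        J1 ∘ₗ J2 = J3 ∧ J2 ∘ₗ J1 = -J3 ∧
        (∀ x y : L, nijenhuis J1 x y = 0) ∧
        (∀ x y : L, nijenhuis J2 x y = 0) ∧
        (∀ x y : L, nijenhuis J3 x y = 0) := by
  set M : Submodule ℝ (ℂ ⊗[ℝ] L) := m.toSubmodule.restrictScalars ℝ with hM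
  set Mσ : Submodule ℝ (ℂ ⊗[ℝ] L) := M.map (conjugation L) with hMσdef
  have hcompl : IsCompl M Mσ := ⟨disjoint_iff.mpr hinf, codisjoint_iff.mpr hsup⟩
  set P : (ℂ ⊗[ℝ] L) →ₗ[ℝ] (ℂ ⊗[ℝ] L) :=
    M.subtype ∘ₗ (M.projectionOnto Mσ hcompl) with hPdef
  have hPmem : ∀ v, P v ∈ M := fun v => ((M.projectionOnto Mσ hcompl) v).2
  have hPleft : ∀ v ∈ M, P v = v := by
    intro v hv
    have := Submodule.projectionOnto_apply_left hcompl ⟨v, hv⟩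
    simpa [hPdef] using congrArg Subtype.val this
  have hPright : ∀ v ∈ Mσ, P v = 0 := by
    intro v hv
    have := Submodule.projectionOnto_apply_of_mem_right hcompl hv
    simp [hPdef, this]
  have hQmem : ∀ v, v - P v ∈ Mσ := by
    intro v
    have hv : v ∈ M ⊔ Mσ := by rw [hsup]; trivial
    obtain ⟨a, ha, b, hb, rfl⟩ := Submodule.mem_sup.mp hv
    have hP : P (a + b) = a := by rw [map_add, hPleft a ha, hPright b hb, add_zero]
    rw [hP, show a + b - a = b from by abel]
    exact hb
  -- basic closure facts
  have hMsmul : ∀ (c : ℂ), ∀ v ∈ M, c • v ∈ M := fun c v hv => m.toSubmodule.smul_mem c hv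
  have hσM : ∀ v ∈ M, conjugation L v ∈ Mσ := fun v hv => Submodule.mem_map_of_mem hv
  have hσMσ : ∀ v ∈ Mσ, conjugation L v ∈ M := by
    rintro v ⟨w, hw, rfl⟩
    rw [conj_conj]; exact hw
  have hMσsmul : ∀ (c : ℂ), ∀ v ∈ Mσ, c • v ∈ Mσ := by
    rintro c v ⟨w, hw, rfl⟩
    refine ⟨(starRingEnd ℂ) c • w, hMsmul _ _ hw, ?_⟩
    rw [conj_smul, Complex.conj_conj]
  have hMlie : ∀ x ∈ M, ∀ y ∈ M, ⁅x, y⁆ ∈ M := fun x hx y hy => m.lie_mem hx hy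
  have hMσlie : ∀ x ∈ Mσ, ∀ y ∈ Mσ, ⁅x, y⁆ ∈ Mσ := by
    rintro x ⟨a, ha, rfl⟩ y ⟨b, hb, rfl⟩
    exact ⟨⁅a, b⁆, hMlie a ha b hb, (conj_lie a b).symm ▸ rfl⟩
  -- J facts
  have hJJv : ∀ v, J (J v) = -v := by
    intro v
    have := congrArg (fun F => F v) hJJ
    simpa using this
  have hσJv : ∀ v, conjugation L (J v) = J (conjugation L v) := by
    intro v
    have := congrArg (fun F => F v) hσJ
    simpa using this
  have hJM : ∀ v ∈ M, J v ∈ Mσ := by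
    intro v hv
    rw [← hJm]
    exact ⟨v, hv, rfl⟩
  have hJMσ : ∀ v ∈ Mσ, J v ∈ M := by
    intro v hv
    rw [← hJm] at hv
    obtain ⟨u, hu, rfl⟩ := hv
    have : J ((J.restrictScalars ℝ) u) = -u := hJJv u
    rw [this]
    exact M.neg_mem hu
  -- P interaction
  have hPsmul : ∀ (c : ℂ) v, P (c • v) = c • P v := by
    intro c v
    have h1 : c • v = c • P v + c • (v - P v) := by
      rw [← smul_add]
      congr 1
      abel
    rw [h1, map_add, hPleft _ (hMsmul c _ (hPmem v)), hPright _ (hMσsmul c _ (hQmem v)),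
      add_zero]
  have hPσ : ∀ v, P (conjugation L v) = conjugation L v - conjugation L (P v) := by
    intro v
    have h1 : conjugation L (v - P v) + conjugation L (P v) = conjugation L v := by
      rw [← map_add]
      congr 1
      abel
    have h2 : P (conjugation L (v - P v) + conjugation L (P v)) = conjugation L (v - P v) := by
      rw [map_add, hPleft _ (hσMσ _ (hQmem v)), hPright _ (hσM _ (hPmem v)), add_zero]
    calc P (conjugation L v) = conjugation L (v - P v) := by rw [← h1, h2]
      _ = conjugation L v - conjugation L (P v) := by rw [map_sub]
  have hPJ : ∀ v, P (J v) = J v - J (P v) := by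
    intro v
    have h1 : J (v - P v) + J (P v) = J v := by
      rw [← map_add]
      congr 1
      abel
    have h2 : P (J (v - P v) + J (P v)) = J (v - P v) := by
      rw [map_add, hPleft _ (hJMσ _ (hQmem v)), hPright _ (hJM _ (hPmem v)), add_zero]
    calc P (J v) = J (v - P v) := by rw [← h1, h2]
      _ = J v - J (P v) := by rw [map_sub]
  -- the complex structure Jc1
  set μI : (ℂ ⊗[ℝ] L) →ₗ[ℝ] (ℂ ⊗[ℝ] L) :=
    (Complex.I • (LinearMap.id : (ℂ ⊗[ℝ] L) →ₗ[ℂ] (ℂ ⊗[ℝ] L))).restrictScalars ℝ with hμI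
  set Jc1 : (ℂ ⊗[ℝ] L) →ₗ[ℝ] (ℂ ⊗[ℝ] L) := μI ∘ₗ (P + P - LinearMap.id) with hJc1def
  have hJc1v : ∀ v, Jc1 v = Complex.I • (P v + P v - v) := by
    intro v
    simp [hJc1def, hμI]
  have hJc1M : ∀ v ∈ M, Jc1 v = Complex.I • v := by
    intro v hv
    rw [hJc1v, hPleft v hv, show v + v - v = v from by abel]
  have hJc1Mσ : ∀ v ∈ Mσ, Jc1 v = (-Complex.I) • v := by
    intro v hv
    rw [hJc1v, hPright v hv, show (0:ℂ ⊗[ℝ] L) + 0 - v = -v from by abel, smul_neg,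
      ← neg_smul]
  have hJc1smul : ∀ (c : ℂ) v, Jc1 (c • v) = c • Jc1 v := by
    intro c v
    rw [hJc1v, hJc1v, hPsmul, ← smul_add, ← smul_sub, smul_comm]
  have hJc1σ : ∀ v, Jc1 (conjugation L v) = conjugation L (Jc1 v) := by
    intro v
    calc Jc1 (conjugation L v)
        = Complex.I • (P (conjugation L v) + P (conjugation L v) - conjugation L v) :=
          hJc1v _
      _ = Complex.I • ((conjugation L v - conjugation L (P v)) +
            (conjugation L v - conjugation L (P v)) - conjugation L v) := by rw [hPσ]
      _ = -(Complex.I • (conjugation L (P v) + conjugation L (P v) - conjugation L v)) := by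
          module
      _ = -(Complex.I • (conjugation L (P v + P v - v))) := by rw [map_sub, map_add]
      _ = conjugation L (Complex.I • (P v + P v - v)) := by
          rw [conj_smul, Complex.conj_I, neg_smul]
      _ = conjugation L (Jc1 v) := by rw [← hJc1v]
  have hJc1J : ∀ v, Jc1 (J v) = -(J (Jc1 v)) := by
    intro v
    calc Jc1 (J v) = Complex.I • (P (J v) + P (J v) - J v) := hJc1v _
      _ = Complex.I • ((J v - J (P v)) + (J v - J (P v)) - J v) := by rw [hPJ]
      _ = -(Complex.I • (J (P v) + J (P v) - J v)) := by module
      _ = -(Complex.I • (J (P v + P v - v))) := by rw [map_sub, map_add]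
      _ = -(J (Complex.I • (P v + P v - v))) := by rw [map_smul]
      _ = -(J (Jc1 v)) := by rw [← hJc1v]
  have hPJc1 : ∀ v, P (Jc1 v) = Complex.I • P v := by
    intro v
    have h1 : Jc1 v = Complex.I • P v + (-(Complex.I • (v - P v))) := by
      rw [hJc1v]
      module
    rw [h1, map_add, hPleft _ (hMsmul _ _ (hPmem v)), map_neg,
      hPright _ (hMσsmul _ _ (hQmem v)), neg_zero, add_zero]
  have hJc1sq : ∀ v, Jc1 (Jc1 v) = -v := by
    intro v
    rw [hJc1v (Jc1 v), hPJc1, hJc1v v]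
    match_scalars <;> norm_num [Complex.ext_iff]
  -- bracket-smul helpers with the right instances
  have eSL : ∀ (c : ℂ) (a b : ℂ ⊗[ℝ] L), ⁅c • a, b⁆ = c • ⁅a, b⁆ := by
    intro c a b
    have h := smul_lie (R := ℂ) (L := ℂ ⊗[ℝ] L) (M := ℂ ⊗[ℝ] L) c a b
    exact h
  have eLS : ∀ (c : ℂ) (a b : ℂ ⊗[ℝ] L), ⁅a, c • b⁆ = c • ⁅a, b⁆ := by
    intro c a b
    have h := lie_smul (R := ℂ) (L := ℂ ⊗[ℝ] L) (M := ℂ ⊗[ℝ] L) c a b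
    exact h
  -- vanishing of the Nijenhuis tensor of Jc1
  have case1mm : ∀ x ∈ M, ∀ y ∈ M, nijenhuis Jc1 x y = 0 := by
    intro x hx y hy
    have hB : ⁅x, y⁆ ∈ M := hMlie x hx y hy
    rw [nijenhuis, hJc1M x hx, hJc1M y hy]
    simp only [eSL, eLS]
    rw [hJc1smul, hJc1M _ hB]
    match_scalars <;> norm_num [Complex.ext_iff]
  have case1ms : ∀ x ∈ M, ∀ y ∈ Mσ, nijenhuis Jc1 x y = 0 := by
    intro x hx y hy
    rw [nijenhuis, hJc1M x hx, hJc1Mσ y hy]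
    simp only [eSL, eLS]
    rw [hJc1smul, hJc1smul]
    match_scalars <;> norm_num [Complex.ext_iff]
  have case1sm : ∀ x ∈ Mσ, ∀ y ∈ M, nijenhuis Jc1 x y = 0 := by
    intro x hx y hy
    rw [nijenhuis, hJc1Mσ x hx, hJc1M y hy]
    simp only [eSL, eLS]
    rw [hJc1smul, hJc1smul]
    match_scalars <;> norm_num [Complex.ext_iff]
  have case1ss : ∀ x ∈ Mσ, ∀ y ∈ Mσ, nijenhuis Jc1 x y = 0 := by
    intro x hx y hy
    have hB : ⁅x, y⁆ ∈ Mσ := hMσlie x hx y hy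
    rw [nijenhuis, hJc1Mσ x hx, hJc1Mσ y hy]
    simp only [eSL, eLS]
    rw [hJc1smul, hJc1Mσ _ hB]
    match_scalars <;> norm_num [Complex.ext_iff]
  have hnijJc1 : ∀ v w, nijenhuis Jc1 v w = 0 := by
    intro v w
    have hv : v ∈ M ⊔ Mσ := by rw [hsup]; trivial
    have hw : w ∈ M ⊔ Mσ := by rw [hsup]; trivial
    obtain ⟨a, ha, b, hb, rfl⟩ := Submodule.mem_sup.mp hv
    obtain ⟨c, hc, d, hd, rfl⟩ := Submodule.mem_sup.mp hw
    rw [nij_add_left, nij_add_right, nij_add_right, case1mm a ha c hc,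
      case1ms a ha d hd, case1sm b hb c hc, case1ss b hb d hd, add_zero, add_zero]
  -- the operator Jc3
  set Jc3 : (ℂ ⊗[ℝ] L) →ₗ[ℝ] (ℂ ⊗[ℝ] L) := Jc1 ∘ₗ (J.restrictScalars ℝ) with hJc3def
  have hJc3v : ∀ v, Jc3 v = Jc1 (J v) := fun v => rfl
  have hJc3M : ∀ v ∈ M, Jc3 v = (-Complex.I) • (J v) := by
    intro v hv
    rw [hJc3v, hJc1Mσ _ (hJM v hv)]
  have hJc3Mσ : ∀ v ∈ Mσ, Jc3 v = Complex.I • (J v) := by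
    intro v hv
    rw [hJc3v, hJc1M _ (hJMσ v hv)]
  have hJc3smul : ∀ (c : ℂ) v, Jc3 (c • v) = c • Jc3 v := by
    intro c v
    rw [hJc3v, hJc3v, map_smul, hJc1smul]
  -- vanishing of the Nijenhuis tensor of Jc3
  have case3mm : ∀ x ∈ M, ∀ y ∈ M, nijenhuis Jc3 x y = 0 := by
    intro x hx y hy
    have hNJ' := hNJ x y
    rw [nijenhuis] at hNJ'
    have hsum : J ⁅J x, y⁆ + J ⁅x, J y⁆ = ⁅J x, J y⁆ - ⁅x, y⁆ := by
      linear_combination (norm := module) hNJ'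
    have hD : ⁅J x, J y⁆ ∈ Mσ := hMσlie _ (hJM x hx) _ (hJM y hy)
    have hC : ⁅x, y⁆ ∈ M := hMlie x hx y hy
    have h2 : Jc3 ⁅J x, y⁆ + Jc3 ⁅x, J y⁆
        = (-Complex.I) • ⁅J x, J y⁆ - Complex.I • ⁅x, y⁆ := by
      rw [hJc3v, hJc3v, ← map_add, hsum, map_sub, hJc1Mσ _ hD, hJc1M _ hC]
    have h3 : (-Complex.I) • Jc3 ⁅J x, y⁆ + (-Complex.I) • Jc3 ⁅x, J y⁆
        = -⁅J x, J y⁆ - ⁅x, y⁆ := by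
      rw [← smul_add, h2]
      simp only [smul_sub, smul_smul, neg_mul, mul_neg, Complex.I_mul_I, neg_neg,
        one_smul, neg_one_smul]
      try module
    rw [nijenhuis, hJc3M x hx, hJc3M y hy]
    simp only [eSL, eLS]
    rw [hJc3smul, hJc3smul]
    simp only [smul_smul, neg_mul, mul_neg, Complex.I_mul_I, neg_neg, one_smul,
      neg_one_smul]
    linear_combination (norm := module) h3
  have case3ss : ∀ x ∈ Mσ, ∀ y ∈ Mσ, nijenhuis Jc3 x y = 0 := by
    intro x hx y hy
    have hNJ' := hNJ x y
    rw [nijenhuis] at hNJ'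
    have hsum : J ⁅J x, y⁆ + J ⁅x, J y⁆ = ⁅J x, J y⁆ - ⁅x, y⁆ := by
      linear_combination (norm := module) hNJ'
    have hD : ⁅J x, J y⁆ ∈ M := hMlie _ (hJMσ x hx) _ (hJMσ y hy)
    have hC : ⁅x, y⁆ ∈ Mσ := hMσlie x hx y hy
    have h2 : Jc3 ⁅J x, y⁆ + Jc3 ⁅x, J y⁆
        = Complex.I • ⁅J x, J y⁆ + Complex.I • ⁅x, y⁆ := by
      rw [hJc3v, hJc3v, ← map_add, hsum, map_sub, hJc1M _ hD, hJc1Mσ _ hC]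
      module
    have h3 : Complex.I • Jc3 ⁅J x, y⁆ + Complex.I • Jc3 ⁅x, J y⁆
        = -⁅J x, J y⁆ - ⁅x, y⁆ := by
      rw [← smul_add, h2]
      simp only [smul_add, smul_smul, neg_mul, mul_neg, Complex.I_mul_I, neg_neg,
        one_smul, neg_one_smul]
      try module
    rw [nijenhuis, hJc3Mσ x hx, hJc3Mσ y hy]
    simp only [eSL, eLS]
    rw [hJc3smul, hJc3smul]
    simp only [smul_smul, neg_mul, mul_neg, Complex.I_mul_I, neg_neg, one_smul,
      neg_one_smul]
    linear_combination (norm := module) h3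
  have case3ms : ∀ x ∈ M, ∀ y ∈ Mσ, nijenhuis Jc3 x y = 0 := by
    intro x hx y hy
    have hNJ' := hNJ x y
    rw [nijenhuis] at hNJ'
    have hA : ⁅J x, y⁆ ∈ Mσ := hMσlie _ (hJM x hx) y hy
    have hB : ⁅x, J y⁆ ∈ M := hMlie x hx _ (hJMσ y hy)
    rw [nijenhuis, hJc3M x hx, hJc3Mσ y hy]
    simp only [eSL, eLS]
    rw [hJc3smul, hJc3smul, hJc3Mσ _ hA, hJc3M _ hB]
    simp only [smul_smul, neg_mul, mul_neg, Complex.I_mul_I, neg_neg, one_smul,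
      neg_one_smul]
    linear_combination (norm := module) hNJ'
  have case3sm : ∀ x ∈ Mσ, ∀ y ∈ M, nijenhuis Jc3 x y = 0 := by
    intro x hx y hy
    have hNJ' := hNJ x y
    rw [nijenhuis] at hNJ'
    have hA : ⁅J x, y⁆ ∈ M := hMlie _ (hJMσ x hx) y hy
    have hB : ⁅x, J y⁆ ∈ Mσ := hMσlie x hx _ (hJM y hy)
    rw [nijenhuis, hJc3Mσ x hx, hJc3M y hy]
    simp only [eSL, eLS]
    rw [hJc3smul, hJc3smul, hJc3M _ hA, hJc3Mσ _ hB]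
    simp only [smul_smul, neg_mul, mul_neg, Complex.I_mul_I, neg_neg, one_smul,
      neg_one_smul]
    linear_combination (norm := module) hNJ'
  have hnijJc3 : ∀ v w, nijenhuis Jc3 v w = 0 := by
    intro v w
    have hv : v ∈ M ⊔ Mσ := by rw [hsup]; trivial
    have hw : w ∈ M ⊔ Mσ := by rw [hsup]; trivial
    obtain ⟨a, ha, b, hb, rfl⟩ := Submodule.mem_sup.mp hv
    obtain ⟨c, hc, d, hd, rfl⟩ := Submodule.mem_sup.mp hw
    rw [nij_add_left, nij_add_right, nij_add_right, case3mm a ha c hc,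
      case3ms a ha d hd, case3sm b hb c hc, case3ss b hb d hd, add_zero, add_zero]
  -- the real operators
  set J1 : L →ₗ[ℝ] L := rePart ∘ₗ (Jc1 ∘ₗ ι) with hJ1def
  set J2 : L →ₗ[ℝ] L := rePart ∘ₗ ((J.restrictScalars ℝ) ∘ₗ ι) with hJ2def
  set J3 : L →ₗ[ℝ] L := J1 ∘ₗ J2 with hJ3def
  have hι1 : ∀ x : L, (ι (J1 x) : ℂ ⊗[ℝ] L) = Jc1 (ι x) := by
    intro x
    have hfix : conjugation L (Jc1 (ι x)) = Jc1 (ι x) := by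
      rw [← hJc1σ, conj_ι]
    rw [show J1 x = rePart (Jc1 (ι x)) from rfl]
    exact (fixed_eq hfix).symm
  have hι2 : ∀ x : L, (ι (J2 x) : ℂ ⊗[ℝ] L) = J (ι x) := by
    intro x
    have hfix : conjugation L (J (ι x)) = J (ι x) := by
      rw [hσJv, conj_ι]
    rw [show J2 x = rePart (J (ι x)) from rfl]
    exact (fixed_eq hfix).symm
  have hι3 : ∀ x : L, (ι (J3 x) : ℂ ⊗[ℝ] L) = Jc1 (J (ι x)) := by
    intro x
    rw [show J3 x = J1 (J2 x) from rfl, hι1, hι2]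
  have hext : ∀ f g : L →ₗ[ℝ] L, (∀ x, (ι (f x) : ℂ ⊗[ℝ] L) = ι (g x)) → f = g :=
    fun f g h => LinearMap.ext fun x => ι_injective (h x)
  have hanti : ∀ v, J (Jc1 v) = -(Jc1 (J v)) := by
    intro v
    rw [hJc1J v, neg_neg]
  refine ⟨J1, J2, J3, ?_, ?_, ?_, hJ3def.symm, ?_, ?_, ?_, ?_⟩
  · apply hext
    intro x
    rw [show (J1 ∘ₗ J1) x = J1 (J1 x) from rfl, hι1, hι1, hJc1sq,
      show (-LinearMap.id : L →ₗ[ℝ] L) x = -x from rfl, map_neg]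
  · apply hext
    intro x
    rw [show (J2 ∘ₗ J2) x = J2 (J2 x) from rfl, hι2, hι2, hJJv,
      show (-LinearMap.id : L →ₗ[ℝ] L) x = -x from rfl, map_neg]
  · apply hext
    intro x
    rw [show (J3 ∘ₗ J3) x = J3 (J3 x) from rfl, hι3, hι3, hanti, map_neg, hJc1sq,
      neg_neg, hJJv, show (-LinearMap.id : L →ₗ[ℝ] L) x = -x from rfl, map_neg]
  · apply hext
    intro x
    rw [show (J2 ∘ₗ J1) x = J2 (J1 x) from rfl, hι2, hι1,
      show (-J3 : L →ₗ[ℝ] L) x = -(J3 x) from rfl, map_neg, hι3, hanti]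
  · intro x y
    apply ι_injective
    rw [nij_transfer J1 Jc1 hι1 x y, hnijJc1, map_zero]
  · intro x y
    apply ι_injective
    have hι2' : ∀ x : L, (ι (J2 x) : ℂ ⊗[ℝ] L) = (J.restrictScalars ℝ) (ι x) := hι2
    have hNJr : ∀ v w, nijenhuis (J.restrictScalars ℝ) v w = 0 := fun v w => hNJ v w
    rw [nij_transfer J2 (J.restrictScalars ℝ) hι2' x y, hNJr, map_zero]
  · intro x y
    apply ι_injective
    have hι3' : ∀ x : L, (ι (J3 x) : ℂ ⊗[ℝ] L) = Jc3 (ι x) := hι3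
    rw [nij_transfer J3 Jc3 hι3' x y, hnijJc3, map_zero]

end Backward

end Stmt3Aux

/-- A hypercomplex structure on a real Lie algebra `g` (a triple of
integrable complex structures `J₁, J₂, J₃` with `J₁J₂ = -J₂J₁ = J₃`) is equivalent to the
data of a pair `(m, J)` where `m` is a complex Lie subalgebra of `g^ℂ` with
`g^ℂ = m ⊕ σ(m)`, and `J` is a `ℂ`-linear endomorphism of `g^ℂ` satisfying `J² = -Id`,
`N_J = 0`, `σJ = Jσ`, and `J(m) = σ(m)`. -/
theorem stmt3 (L : Type*) [LieRing L] [LieAlgebra ℝ L] [FiniteDimensional ℝ L] :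
    (∃ J1 J2 J3 : L →ₗ[ℝ] L,
        J1 ∘ₗ J1 = -LinearMap.id ∧ J2 ∘ₗ J2 = -LinearMap.id ∧
        J3 ∘ₗ J3 = -LinearMap.id ∧
        J1 ∘ₗ J2 = J3 ∧ J2 ∘ₗ J1 = -J3 ∧
        (∀ x y : L, nijenhuis J1 x y = 0) ∧
        (∀ x y : L, nijenhuis J2 x y = 0) ∧
        (∀ x y : L, nijenhuis J3 x y = 0)) ↔
    (∃ (m : LieSubalgebra ℂ (ℂ ⊗[ℝ] L)) (J : (ℂ ⊗[ℝ] L) →ₗ[ℂ] (ℂ ⊗[ℝ] L)),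
        (m.toSubmodule.restrictScalars ℝ) ⊓
          (m.toSubmodule.restrictScalars ℝ).map (conjugation L) = ⊥ ∧
        (m.toSubmodule.restrictScalars ℝ) ⊔
          (m.toSubmodule.restrictScalars ℝ).map (conjugation L) = ⊤ ∧
        J ∘ₗ J = -LinearMap.id ∧
        (∀ x y : ℂ ⊗[ℝ] L, nijenhuis J x y = 0) ∧
        conjugation L ∘ₗ (J.restrictScalars ℝ) = (J.restrictScalars ℝ) ∘ₗ conjugation L ∧
        (m.toSubmodule.restrictScalars ℝ).map (J.restrictScalars ℝ) =
          (m.toSubmodule.restrictScalars ℝ).map (conjugation L)) := by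
  constructor
  · rintro ⟨J1, J2, J3, h1, h2, _h3, h12, h21, hN1, hN2, _hN3⟩
    exact Stmt3Aux.forward J1 J2 J3 h1 h2 h12 h21 hN1 hN2
  · rintro ⟨m, J, hinf, hsup, hJJ, hNJ, hσJ, hJm⟩
    exact Stmt3Aux.backward m J hinf hsup hJJ hNJ hσJ hJm
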